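/- Let g_1,…,g_d : [0,1] → ℝ^n be Lipschitz paths and define x ∈ Lip(□^d, ℝ^n) by x(s_1,…,s_d) := Σ_{j=1}^d g_j(s_j). Suppose for some j₀ ∈ {1,…,d} the path g_{j₀} has trivial path signature, i.e. S_m^Q(g_{j₀}) = 0 for every m ≥ 1 and every multi-index Q ∈ {1,…,n}^m (for example, if g_{j₀} is a tree-like path). Then Φ_m^{P,π}(x) = 0 for every m ≥ 1 and every level-m index (P,π) ∈ O_{d,n}^m × Σ_m^d. -/

import Mathlib

open MeasureTheory

open scoped Classical

noncomputable section

/-- The unit cube `[0,1]^d` as a subset of `Fin d → ℝ`. -/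
def unitCube (d : ℕ) : Set (Fin d → ℝ) := Set.Icc 0 1

/-- Lipschitz condition with constant `L`, with respect to Euclidean norms. -/
def EuclidLip {d n : ℕ} (L : ℝ) (x : (Fin d → ℝ) → Fin n → ℝ) : Prop :=
  ∀ s t : Fin d → ℝ,
    Real.sqrt (∑ k, (x s k - x t k) ^ 2) ≤ L * Real.sqrt (∑ j, (s j - t j) ^ 2)

/-- Lipschitz map. -/
def IsLipMap {d n : ℕ} (x : (Fin d → ℝ) → Fin n → ℝ) : Prop :=
  ∃ L : ℝ, EuclidLip L x

/-- The Jacobian minor `J[x_P](s)`: the determinant of the `d × d` matrix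
with `(i,j)` entry `∂ x_{P i} / ∂ s_j (s)`. -/
def jacobianMinor {d n : ℕ} (x : (Fin d → ℝ) → Fin n → ℝ) (P : Fin d → Fin n)
    (s : Fin d → ℝ) : ℝ :=
  (Matrix.of fun i j : Fin d => fderiv ℝ (fun t => x t (P i)) s (Pi.single j 1)).det

/-- The permuted `m`-simplex `Δ^m_π(a,b)`. -/
def permSimplex {m : ℕ} (π : Equiv.Perm (Fin m)) (a b : ℝ) : Set (Fin m → ℝ) :=
  {u | (∀ i, u i ∈ Set.Icc a b) ∧ StrictMono fun i => u (π i)}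

/-- The integration domain `D^{m,d}_π(a,b) = Δ^m_{π 1}(a₁,b₁) × ⋯ × Δ^m_{π d}(a_d,b_d)`. -/
def intDomain {m d : ℕ} (π : Fin d → Equiv.Perm (Fin m)) (a b : Fin d → ℝ) :
    Set (Fin m → Fin d → ℝ) :=
  {t | ∀ j, (fun i => t i j) ∈ permSimplex (π j) (a j) (b j)}

/-- The restricted mapping space monomial `Φ_m^{P,π}(x)_{a,b}`. -/
def msMonomialOn {d n m : ℕ} (x : (Fin d → ℝ) → Fin n → ℝ)
    (P : Fin m → Fin d → Fin n) (π : Fin d → Equiv.Perm (Fin m))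
    (a b : Fin d → ℝ) : ℝ :=
  ∫ t in intDomain π a b, ∏ i, jacobianMinor x (P i) (t i)

/-- The mapping space monomial `Φ_m^{P,π}(x)`. -/
def msMonomial {d n m : ℕ} (x : (Fin d → ℝ) → Fin n → ℝ)
    (P : Fin m → Fin d → Fin n) (π : Fin d → Equiv.Perm (Fin m)) : ℝ :=
  msMonomialOn x P π (fun _ => 0) (fun _ => 1)

/-- Lipschitz path (Euclidean norm on the codomain). -/
def IsLipPath {n : ℕ} (g : ℝ → Fin n → ℝ) : Prop :=
  ∃ L : ℝ, ∀ u v : ℝ, Real.sqrt (∑ k, (g u k - g v k) ^ 2) ≤ L * |u - v|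

/-- The path signature monomial `S_m^Q(g) = ∫_{0 ≤ u₁ < ⋯ < u_m ≤ 1} ∏ g'_{Q i}(u_i) du`. -/
def pathSig {n : ℕ} (m : ℕ) (g : ℝ → Fin n → ℝ) (Q : Fin m → Fin n) : ℝ :=
  ∫ u in permSimplex (1 : Equiv.Perm (Fin m)) 0 1,
    ∏ i, deriv (fun v => g v (Q i)) (u i)

noncomputable section

/-- Transpose as a measurable equivalence. -/
def transposeEquiv (m d : ℕ) : (Fin m → Fin d → ℝ) ≃ᵐ (Fin d → Fin m → ℝ) where
  toEquiv := ⟨fun t j i => t i j, fun u i j => u j i, fun _ => rfl, fun _ => rfl⟩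
  measurable_toFun := measurable_pi_lambda _ fun j => measurable_pi_lambda _ fun i =>
    (measurable_pi_apply j).comp (measurable_pi_apply i)
  measurable_invFun := measurable_pi_lambda _ fun i => measurable_pi_lambda _ fun j =>
    (measurable_pi_apply i).comp (measurable_pi_apply j)

lemma transpose_mp (m d : ℕ) :
    MeasurePreserving (transposeEquiv m d) volume volume := by
  refine ⟨(transposeEquiv m d).measurable, ?_⟩
  symm
  rw [show (volume : Measure (Fin d → Fin m → ℝ)) = Measure.pi (fun _ => volume) from rfl]
  refine Measure.pi_eq_generateFrom
    (C := fun _ : Fin d => (Set.pi Set.univ '' Set.pi Set.univ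
      (fun _ : Fin m => {s : Set ℝ | MeasurableSet s})))
    (fun _ => generateFrom_pi)
    (fun _ => isPiSystem_pi)
    (fun _ => ?_) ?_
  · -- finite spanning sets
    have h := Measure.FiniteSpanningSetsIn.pi
      (fun _ : Fin m => (volume : Measure ℝ).toFiniteSpanningSetsIn)
    exact ⟨h.set, h.set_mem, fun n => by simpa [volume_pi] using h.finite n, h.spanning⟩
  · intro S hS
    choose s hs hs2 using fun j => hS j
    have hsm : ∀ j i, MeasurableSet (s j i) := by
      intro j i
      have := hs j
      exact this i (Set.mem_univ i)
    have hSm : MeasurableSet (Set.pi Set.univ S) := by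
      refine MeasurableSet.pi Set.countable_univ fun j _ => ?_
      rw [← hs2 j]
      exact MeasurableSet.pi Set.countable_univ fun i _ => hsm j i
    rw [Measure.map_apply (transposeEquiv m d).measurable hSm]
    have hpre : (transposeEquiv m d) ⁻¹' (Set.pi Set.univ S)
        = Set.pi Set.univ (fun i => Set.pi Set.univ (fun j => s j i)) := by
      ext t
      simp only [Set.mem_preimage, Set.mem_univ_pi, ← hs2]
      constructor
      · intro h i j; exact h j i
      · intro h j i; exact h i j
    rw [hpre, volume_pi_pi]
    have : ∀ j, volume (S j) = ∏ i, volume (s j i) := by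
      intro j; rw [← hs2 j, volume_pi_pi]
    simp_rw [this, volume_pi_pi]
    exact Finset.prod_comm

end

noncomputable section
open MeasureTheory

lemma lipschitz_coord {n : ℕ} {g : ℝ → Fin n → ℝ} {L : ℝ}
    (h : ∀ u v : ℝ, Real.sqrt (∑ k, (g u k - g v k) ^ 2) ≤ L * |u - v|) (k : Fin n) :
    LipschitzWith (Real.toNNReal L) (fun u => g u k) := by
  apply LipschitzWith.of_dist_le_mul
  intro u v
  rw [Real.dist_eq, Real.dist_eq]
  have h1 : |g u k - g v k| ≤ Real.sqrt (∑ k', (g u k' - g v k') ^ 2) := by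
    rw [← Real.sqrt_sq_eq_abs]
    exact Real.sqrt_le_sqrt (Finset.single_le_sum
      (f := fun k' => (g u k' - g v k') ^ 2) (fun k' _ => sq_nonneg _) (Finset.mem_univ k))
  refine h1.trans ((h u v).trans ?_)
  exact mul_le_mul_of_nonneg_right (Real.le_coe_toNNReal L) (abs_nonneg _)

lemma deriv_bound {f : ℝ → ℝ} {C : NNReal} (h : LipschitzWith C f) (v : ℝ) :
    |deriv f v| ≤ (C : ℝ) := by
  have h1 : deriv f v = fderiv ℝ f v 1 := fderiv_apply_one_eq_deriv
  rw [h1]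
  calc |fderiv ℝ f v 1| ≤ ‖fderiv ℝ f v‖ * ‖(1 : ℝ)‖ := (fderiv ℝ f v).le_opNorm 1
    _ = ‖fderiv ℝ f v‖ := by simp
    _ ≤ (C : ℝ) := norm_fderiv_le_of_lipschitz ℝ h

lemma measurableSet_permSimplex {m : ℕ} (π : Equiv.Perm (Fin m)) (a b : ℝ) :
    MeasurableSet (permSimplex π a b) := by
  have h1 : MeasurableSet {u : Fin m → ℝ | ∀ i, u i ∈ Set.Icc a b} := by
    have : {u : Fin m → ℝ | ∀ i, u i ∈ Set.Icc a b}
        = ⋂ i, (fun u : Fin m → ℝ => u i) ⁻¹' Set.Icc a b := by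
      ext u; simp
    rw [this]
    exact MeasurableSet.iInter fun i => (measurable_pi_apply i) measurableSet_Icc
  have h2 : MeasurableSet {u : Fin m → ℝ | StrictMono fun i => u (π i)} := by
    have : {u : Fin m → ℝ | StrictMono fun i => u (π i)}
        = ⋂ (p : Fin m × Fin m) (_ : p.1 < p.2), {u | u (π p.1) < u (π p.2)} := by
      ext u
      simp only [Set.mem_iInter, Set.mem_setOf_eq]
      constructor
      · intro hs p hp; exact hs hp
      · intro hs i i' hlt; exact hs (i, i') hlt
    rw [this]
    exact MeasurableSet.iInter fun p => MeasurableSet.iInter fun _ =>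
      measurableSet_lt (measurable_pi_apply _) (measurable_pi_apply _)
  exact h1.inter h2

lemma measurableSet_intDomain {m d : ℕ} (π : Fin d → Equiv.Perm (Fin m)) (a b : Fin d → ℝ) :
    MeasurableSet (intDomain π a b) := by
  have : intDomain π a b = ⋂ j, (fun (t : Fin m → Fin d → ℝ) (i : Fin m) => t i j) ⁻¹'
      permSimplex (π j) (a j) (b j) := by
    ext t; simp [intDomain]
  rw [this]
  exact MeasurableSet.iInter fun j =>
    (measurable_pi_lambda _ fun i => (measurable_pi_apply j).comp (measurable_pi_apply i))
      (measurableSet_permSimplex _ _ _)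

lemma null_eval {m d : ℕ} {E : Set ℝ} (hE : MeasureTheory.volume E = 0) (i : Fin m) (j : Fin d) :
    MeasureTheory.volume {t : Fin m → Fin d → ℝ | t i j ∈ E} = 0 := by
  have h1 : MeasureTheory.volume {w : Fin d → ℝ | w j ∈ E} = 0 := by
    have heq : {w : Fin d → ℝ | w j ∈ E}
        = Set.pi Set.univ (fun j' => if j' = j then E else Set.univ) := by
      ext w
      simp only [Set.mem_setOf_eq, Set.mem_univ_pi]
      constructor
      · intro hw j'
        by_cases h : j' = j
        · subst h; simp [hw]
        · simp [h]
      · intro hw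
        have := hw j
        simpa using this
    rw [heq, volume_pi_pi]
    refine Finset.prod_eq_zero (Finset.mem_univ j) ?_
    simp [hE]
  have heq : {t : Fin m → Fin d → ℝ | t i j ∈ E}
      = Set.pi Set.univ (fun i' => if i' = i then {w : Fin d → ℝ | w j ∈ E} else Set.univ) := by
    ext t
    simp only [Set.mem_setOf_eq, Set.mem_univ_pi]
    constructor
    · intro ht i'
      by_cases h : i' = i
      · subst h; simp [ht]
      · simp [h]
    · intro ht
      have := ht i
      simpa using this
  rw [heq, volume_pi_pi]
  refine Finset.prod_eq_zero (Finset.mem_univ i) ?_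
  simp [h1]

end


lemma jac_eq {d n : ℕ} (g : Fin d → ℝ → Fin n → ℝ) (P1 : Fin d → Fin n) (s : Fin d → ℝ)
    (hs : ∀ (j : Fin d) (k : Fin n), DifferentiableAt ℝ (fun u => g j u k) (s j)) :
    jacobianMinor (fun s k => ∑ j, g j (s j) k) P1 s
      = (Matrix.of fun r j => deriv (fun u => g j u (P1 r)) (s j)).det := by
  unfold jacobianMinor
  congr 1
  funext r j
  simp only [Matrix.of_apply]
  have hF : HasFDerivAt (fun t : Fin d → ℝ => ∑ j', g j' (t j') (P1 r))
      (∑ j' : Fin d, deriv (fun u => g j' u (P1 r)) (s j') •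
        (ContinuousLinearMap.proj j' : (Fin d → ℝ) →L[ℝ] ℝ)) s := by
    apply HasFDerivAt.fun_sum
    intro j' _
    have h1 : HasDerivAt (fun u => g j' u (P1 r))
        (deriv (fun u => g j' u (P1 r)) (s j')) (s j') := (hs j' (P1 r)).hasDerivAt
    have h2 : HasFDerivAt (fun t : Fin d → ℝ => t j')
        (ContinuousLinearMap.proj j' : (Fin d → ℝ) →L[ℝ] ℝ) s :=
      (ContinuousLinearMap.proj j' : (Fin d → ℝ) →L[ℝ] ℝ).hasFDerivAt
    have h3 := h1.comp_hasFDerivAt s h2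
    exact h3
  have : fderiv ℝ (fun t : Fin d → ℝ => ∑ j', g j' (t j') (P1 r)) s
      = ∑ j' : Fin d, deriv (fun u => g j' u (P1 r)) (s j') •
        (ContinuousLinearMap.proj j' : (Fin d → ℝ) →L[ℝ] ℝ) := hF.fderiv
  show fderiv ℝ (fun t : Fin d → ℝ => ∑ j', g j' (t j') (P1 r)) s (Pi.single j 1) = _
  rw [this]
  simp [ContinuousLinearMap.sum_apply, Pi.single_apply, Finset.sum_ite_eq']

lemma integral_pi_set_prod {q m : ℕ} (S : Fin q → Set (Fin m → ℝ))
    (hS : ∀ j, MeasurableSet (S j)) (G : Fin q → (Fin m → ℝ) → ℝ) :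
    ∫ u in Set.pi Set.univ S, ∏ j, G j (u j) = ∏ j, ∫ w in S j, G j w := by
  rw [← MeasureTheory.integral_indicator (MeasurableSet.pi Set.countable_univ fun j _ => hS j)]
  have hpt : ∀ u : Fin q → Fin m → ℝ,
      (Set.pi Set.univ S).indicator (fun u => ∏ j, G j (u j)) u
        = ∏ j, (S j).indicator (G j) (u j) := by
    intro u
    by_cases hu : u ∈ Set.pi Set.univ S
    · rw [Set.indicator_of_mem hu]
      exact Finset.prod_congr rfl fun j _ => (Set.indicator_of_mem (hu j (Set.mem_univ j)) _).symm
    · rw [Set.indicator_of_notMem hu]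
      rw [Set.mem_univ_pi] at hu
      push_neg at hu
      obtain ⟨j, hj⟩ := hu
      exact (Finset.prod_eq_zero (Finset.mem_univ j) (Set.indicator_of_notMem hj _)).symm
  simp_rw [hpt]
  rw [MeasureTheory.integral_fintype_prod_volume_eq_prod (f := fun j w => (S j).indicator (G j) w)]
  exact Finset.prod_congr rfl fun j _ => MeasureTheory.integral_indicator (hS j)

lemma integral_permSimplex_comp {m : ℕ} (π : Equiv.Perm (Fin m)) (f : Fin m → ℝ → ℝ) :
    ∫ u in permSimplex π 0 1, ∏ i, f i (u i)
      = ∫ v in permSimplex 1 0 1, ∏ i, f (π i) (v i) := by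
  set E := MeasurableEquiv.piCongrLeft (fun _ : Fin m => ℝ) (π.symm : Fin m ≃ Fin m) with hE
  have hEapp : ∀ (u : Fin m → ℝ) (i : Fin m), E u i = u (π i) := by
    intro u i
    have h1 := Equiv.piCongrLeft_apply_apply (fun _ : Fin m => ℝ)
      (π.symm : Fin m ≃ Fin m) u (π i)
    rw [hE]
    rw [MeasurableEquiv.coe_piCongrLeft]
    simpa using h1
  have hpre : permSimplex π 0 1 = E ⁻¹' permSimplex 1 0 1 := by
    ext u
    simp only [Set.mem_preimage, permSimplex, Set.mem_setOf_eq, Equiv.Perm.coe_one, id_eq]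
    constructor
    · rintro ⟨h1, h2⟩
      constructor
      · intro i; rw [hEapp]; exact h1 (π i)
      · have : (fun i => E u i) = fun i => u (π i) := funext fun i => hEapp u i
        rw [show (StrictMono fun i => E u i) = StrictMono fun i => u (π i) by
          rw [this]]
        exact h2
    · rintro ⟨h1, h2⟩
      constructor
      · intro i
        have := h1 (π.symm i)
        rw [hEapp] at this
        simpa using this
      · have : (fun i => E u i) = fun i => u (π i) := funext fun i => hEapp u i
        rw [← this]
        simpa using h2
  have hcomp : ∀ u : Fin m → ℝ, (∏ i, f i (u i)) = ∏ i, f (π i) (E u i) := by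
    intro u
    simp_rw [hEapp]
    exact (Equiv.prod_comp π (fun b => f b (u b))).symm
  rw [hpre]
  simp_rw [hcomp]
  exact (MeasureTheory.volume_measurePreserving_piCongrLeft (fun _ : Fin m => ℝ)
    (π.symm : Fin m ≃ Fin m)).setIntegral_preimage_emb E.measurableEmbedding
    (fun v => ∏ i, f (π i) (v i)) _


/-- if `x(s) = Σ_j g_j(s_j)` and some `g_{j₀}` has trivial path
signature, then all mapping space monomials of `x` vanish. -/
theorem stmt12 (d n : ℕ) (hd : 1 ≤ d) (hn : d ≤ n)
    (g : Fin d → ℝ → Fin n → ℝ) (hg : ∀ j, IsLipPath (g j))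
    (j₀ : Fin d)
    (htriv : ∀ m : ℕ, 1 ≤ m → ∀ Q : Fin m → Fin n, pathSig m (g j₀) Q = 0) :
    ∀ (m : ℕ), 1 ≤ m → ∀ (P : Fin m → Fin d → Fin n), (∀ i, StrictMono (P i)) →
      ∀ π : Fin d → Equiv.Perm (Fin m),
        msMonomial (fun s k => ∑ j, g j (s j) k) P π = 0 := by
  intro m hm P hP π
  classical
  choose L hL using hg
  set C : Fin d → NNReal := fun j => Real.toNNReal (L j) with hCdef
  have hlip : ∀ (j : Fin d) (k : Fin n), LipschitzWith (C j) (fun u => g j u k) :=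
    fun j k => lipschitz_coord (hL j) k
  have hbd : ∀ (j : Fin d) (k : Fin n) (v : ℝ), |deriv (fun u => g j u k) v| ≤ (C j : ℝ) :=
    fun j k v => deriv_bound (hlip j k) v
  set hder : Fin d → Fin n → ℝ → ℝ := fun j k => deriv (fun u => g j u k) with hhder
  have hmeas : ∀ (j : Fin d) (k : Fin n), Measurable (hder j k) :=
    fun j k => measurable_deriv _
  -- bad set of non-differentiability points
  set E : Set ℝ :=
    {v | ¬ ∀ (j : Fin d) (k : Fin n), DifferentiableAt ℝ (fun u => g j u k) v} with hEdef
  have hEnull : volume E = 0 := by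
    have hae1 : ∀ᵐ v : ℝ, ∀ (j : Fin d) (k : Fin n),
        DifferentiableAt ℝ (fun u => g j u k) v := by
      rw [MeasureTheory.ae_all_iff]
      intro j
      rw [MeasureTheory.ae_all_iff]
      intro k
      exact (hlip j k).ae_differentiableAt_of_real
    exact hae1
  have hae : ∀ᵐ t : Fin m → Fin d → ℝ, ∀ (i : Fin m) (j : Fin d), t i j ∉ E := by
    rw [MeasureTheory.ae_iff]
    refine measure_mono_null (fun t ht => ?_)
      (measure_iUnion_null fun i : Fin m =>
        measure_iUnion_null fun j : Fin d => null_eval hEnull i j)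
    simp only [Set.mem_setOf_eq, not_forall] at ht
    obtain ⟨i, j, hij⟩ := ht
    exact Set.mem_iUnion.2 ⟨i, Set.mem_iUnion.2 ⟨j, by simpa using hij⟩⟩
  -- domains
  set S : Fin d → Set (Fin m → ℝ) := fun j => permSimplex (π j) 0 1 with hSdef
  set D : Set (Fin m → Fin d → ℝ) := intDomain π (fun _ => 0) (fun _ => 1) with hDdef
  have hDm : MeasurableSet D := measurableSet_intDomain _ _ _
  have hDfin : volume D ≠ ⊤ := by
    have hsub : D ⊆ Set.pi Set.univ
        (fun _ : Fin m => Set.pi Set.univ fun _ : Fin d => Set.Icc (0:ℝ) 1) := by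
      intro t ht
      rw [Set.mem_univ_pi]
      intro i
      rw [Set.mem_univ_pi]
      intro j
      exact (ht j).1 i
    refine ne_of_lt (lt_of_le_of_lt (measure_mono hsub) ?_)
    rw [volume_pi_pi]
    simp only [volume_pi_pi, Real.volume_Icc]
    simp
  -- Step A: replace the integrand by the explicit derivative matrix a.e.
  have stepA : msMonomial (fun s k => ∑ j, g j (s j) k) P π
      = ∫ t in D, ∏ i, (Matrix.of fun r j => hder j (P i r) (t i j)).det := by
    show msMonomialOn (fun s k => ∑ j, g j (s j) k) P π (fun _ => 0) (fun _ => 1) = _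
    unfold msMonomialOn
    refine MeasureTheory.setIntegral_congr_ae hDm ?_
    filter_upwards [hae] with t ht _
    refine Finset.prod_congr rfl fun i _ => ?_
    have hgood : ∀ (j : Fin d) (k : Fin n),
        DifferentiableAt ℝ (fun u => g j u k) (t i j) := by
      have h1 := ht i
      intro j k
      have h2 := h1 j
      rw [hEdef] at h2
      simp only [Set.mem_setOf_eq, not_not] at h2
      exact h2 j k
    exact jac_eq g (P i) (t i) hgood
  -- Step B: Leibniz expansion of the product of determinants
  set epsR : Equiv.Perm (Fin d) → ℝ := fun τ => ((Equiv.Perm.sign τ : ℤ) : ℝ) with hepsR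
  have stepB : ∀ t : Fin m → Fin d → ℝ,
      (∏ i, (Matrix.of fun r j => hder j (P i r) (t i j)).det)
        = ∑ σ : Fin m → Equiv.Perm (Fin d),
            (∏ i, epsR (σ i)) * ∏ i, ∏ j, hder j (P i (σ i j)) (t i j) := by
    intro t
    have hdet : ∀ i : Fin m, (Matrix.of fun r j => hder j (P i r) (t i j)).det
        = ∑ τ : Equiv.Perm (Fin d), epsR τ * ∏ j, hder j (P i (τ j)) (t i j) := by
      intro i
      rw [Matrix.det_apply']
      rfl
    simp_rw [hdet]
    rw [Finset.prod_univ_sum (t := fun _ : Fin m => (Finset.univ : Finset (Equiv.Perm (Fin d))))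
      (f := fun i τ => epsR τ * ∏ j, hder j (P i (τ j)) (t i j))]
    rw [Fintype.piFinset_univ]
    exact Finset.sum_congr rfl fun σ _ => Finset.prod_mul_distrib
  -- integrability of each term
  have hW_meas : ∀ K : Fin m → Fin d → Fin n,
      Measurable fun t : Fin m → Fin d → ℝ => ∏ i, ∏ j, hder j (K i j) (t i j) := by
    intro K
    refine Finset.measurable_prod _ fun i _ => ?_
    refine Finset.measurable_prod _ fun j _ => ?_
    exact (hmeas j (K i j)).comp ((measurable_pi_apply j).comp (measurable_pi_apply i))
  have hW_int : ∀ K : Fin m → Fin d → Fin n,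
      MeasureTheory.IntegrableOn
        (fun t : Fin m → Fin d → ℝ => ∏ i, ∏ j, hder j (K i j) (t i j)) D := by
    intro K
    refine MeasureTheory.Measure.integrableOn_of_bounded hDfin
      ((hW_meas K).aestronglyMeasurable) (M := ∏ _i : Fin m, ∏ j, (C j : ℝ)) ?_
    refine Filter.Eventually.of_forall fun t => ?_
    rw [Real.norm_eq_abs, Finset.abs_prod]
    refine Finset.prod_le_prod (fun _ _ => abs_nonneg _) fun i _ => ?_
    rw [Finset.abs_prod]
    exact Finset.prod_le_prod (fun _ _ => abs_nonneg _) fun j _ => hbd j _ _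
  -- factorization along columns
  have hfact : ∀ K : Fin m → Fin d → Fin n,
      ∫ t in D, ∏ i, ∏ j, hder j (K i j) (t i j)
        = ∏ j, ∫ w in S j, ∏ i, hder j (K i j) (w i) := by
    intro K
    have hswap : (fun t : Fin m → Fin d → ℝ => ∏ i, ∏ j, hder j (K i j) (t i j))
        = fun t => ∏ j, ∏ i, hder j (K i j) (t i j) :=
      funext fun t => Finset.prod_comm
    have hDT : D = (transposeEquiv m d) ⁻¹' (Set.pi Set.univ S) := by
      ext t
      simp only [Set.mem_preimage, Set.mem_univ_pi, hDdef, intDomain, Set.mem_setOf_eq]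
      exact Iff.rfl
    rw [hswap, hDT]
    have := (transpose_mp m d).setIntegral_preimage_emb
      (transposeEquiv m d).measurableEmbedding
      (fun u : Fin d → Fin m → ℝ => ∏ j, ∏ i, hder j (K i j) (u j i)) (Set.pi Set.univ S)
    rw [show (∫ t in (transposeEquiv m d) ⁻¹' (Set.pi Set.univ S),
        ∏ j, ∏ i, hder j (K i j) (t i j))
      = ∫ t in (transposeEquiv m d) ⁻¹' (Set.pi Set.univ S),
        (fun u : Fin d → Fin m → ℝ => ∏ j, ∏ i, hder j (K i j) (u j i))
          ((transposeEquiv m d) t) from rfl]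
    rw [this]
    exact integral_pi_set_prod S (fun j => measurableSet_permSimplex _ _ _)
      (fun j w => ∏ i, hder j (K i j) (w i))
  -- the factor at j₀ vanishes
  have hzero : ∀ K : Fin m → Fin d → Fin n,
      ∫ w in S j₀, ∏ i, hder j₀ (K i j₀) (w i) = 0 := by
    intro K
    have h1 := integral_permSimplex_comp (π j₀) (fun i => hder j₀ (K i j₀))
    rw [hSdef]
    rw [h1]
    exact htriv m hm (fun i => K (π j₀ i) j₀)
  -- put everything together
  rw [stepA]
  rw [MeasureTheory.setIntegral_congr_ae hDm
    (Filter.Eventually.of_forall fun t _ => stepB t)]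
  rw [MeasureTheory.integral_finset_sum _
    (fun σ _ => ((hW_int fun i j => P i (σ i j)).const_mul _))]
  refine Finset.sum_eq_zero fun σ _ => ?_
  rw [MeasureTheory.integral_const_mul]
  rw [hfact (fun i j => P i (σ i j))]
  rw [Finset.prod_eq_zero (Finset.mem_univ j₀) (hzero fun i j => P i (σ i j))]
  rw [mul_zero]


end
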